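/- Let κ ≥ 2. Over the alphabet Σ = V ∪ {y_0, …, y_m} (with y_0, …, y_m being m+1 new separator letters) define the target string T = y_0 e_1 y_1 e_2 y_2 ⋯ e_m y_m. Take blocks X_1, …, X_κ together with pairwise distinct further blocks Z_0 and Z_{i,j} for 1 ≤ i < j ≤ κ (each of these occurring exactly once, i.e. jokers), and define the pattern 𝒳 = Z_0 · ∏_{1 ≤ i < j ≤ κ} (X_i X_j Z_{i,j}), the product taken over the pairs (i, j) in lexicographic order. Then the single string equation T ≡ 𝒳 is satisfied by some assignment if and only if G contains a clique of size κ. (Correctness of the reduction in Theorem 4.1.) -/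

import Mathlib

namespace Stmt5

/-- The pairs `(i, j)` with `i < j`, listed in lexicographic order. -/
def pairs (κ : ℕ) : List (Fin κ × Fin κ) :=
  (List.finRange κ).flatMap fun i =>
    ((List.finRange κ).filter fun j => decide (i < j)).map fun j => (i, j)

/-- The alphabet `Σ = V ∪ {y₀, …, y_m}`: `Sum.inl i` is the vertex letter `vᵢ`,
`Sum.inr j` is the separator letter `y_j`. -/
abbrev Letter (n m : ℕ) := Fin n ⊕ Fin (m + 1)

/-- The blocks: `Sum.inl i` is `Xᵢ` (for `1 ≤ i ≤ κ`), `Sum.inr (Sum.inl ())` is the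
joker `Z₀`, and `Sum.inr (Sum.inr (i, j))` is the joker `Z_{i,j}` (used for `i < j`);
each joker occurs exactly once in the pattern. -/
abbrev Blk (κ : ℕ) := Fin κ ⊕ (Unit ⊕ (Fin κ × Fin κ))

/-- The target string `T = y₀ e₁ y₁ e₂ y₂ ⋯ e_m y_m`, where the `j`-th edge is the
two-letter string consisting of its endpoints (smaller index first). -/
def target (n m : ℕ) (edges : Fin m → Fin n × Fin n) : List (Letter n m) :=
  [Sum.inr 0] ++ (List.finRange m).flatMap fun j =>
    [Sum.inl (edges j).1, Sum.inl (edges j).2, Sum.inr j.succ]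

/-- The pattern `𝒳 = Z₀ ∏_{i<j, lex order} (Xᵢ Xⱼ Z_{i,j})`. -/
def pattern (κ : ℕ) : List (Blk κ) :=
  [Sum.inr (Sum.inl ())] ++ (pairs κ).flatMap fun p =>
    [Sum.inl p.1, Sum.inl p.2, Sum.inr (Sum.inr p)]

/-- hand-rolled count, avoiding `BEq` issues -/
def cnt {α : Type*} [DecidableEq α] (c : α) : List α → ℕ
  | [] => 0
  | a :: l => (if a = c then 1 else 0) + cnt c l

@[simp] lemma cnt_nil {α : Type*} [DecidableEq α] (c : α) : cnt c ([] : List α) = 0 := rfl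

@[simp] lemma cnt_cons {α : Type*} [DecidableEq α] (c a : α) (l : List α) :
    cnt c (a :: l) = (if a = c then 1 else 0) + cnt c l := rfl

lemma cnt_append {α : Type*} [DecidableEq α] (c : α) (l₁ l₂ : List α) :
    cnt c (l₁ ++ l₂) = cnt c l₁ + cnt c l₂ := by
  induction l₁ with
  | nil => simp
  | cons a t ih => simp [ih]; omega

lemma cnt_flatMap {α β : Type*} [DecidableEq β] (l : List α) (g : α → List β) (c : β) :
    cnt c (l.flatMap g) = (l.map fun x => cnt c (g x)).sum := by
  induction l with
  | nil => rfl
  | cons a t ih => simp [List.flatMap_cons, cnt_append, ih]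

lemma cnt_pos_of_mem {α : Type*} [DecidableEq α] {c : α} {l : List α} (h : c ∈ l) :
    1 ≤ cnt c l := by
  induction l with
  | nil => simp at h
  | cons a t ih =>
    rcases List.mem_cons.1 h with rfl | h'
    · simp
    · have := ih h'; simp; omega

lemma cnt_eq_zero_of_not_mem {α : Type*} [DecidableEq α] {c : α} {l : List α}
    (h : c ∉ l) : cnt c l = 0 := by
  induction l with
  | nil => rfl
  | cons b s ihs =>
    have hbc : b ≠ c := fun hc => h (hc ▸ List.mem_cons_self (a := b) (l := s))
    have hcs : c ∉ s := fun hc => h (List.mem_cons_of_mem _ hc)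
    simp [hbc, ihs hcs]

lemma cnt_eq_one_of_nodup {α : Type*} [DecidableEq α] {c : α} {l : List α}
    (hn : l.Nodup) (h : c ∈ l) : cnt c l = 1 := by
  induction l with
  | nil => simp at h
  | cons a t ih =>
    rcases List.mem_cons.1 h with rfl | h'
    · have : cnt c t = 0 := cnt_eq_zero_of_not_mem (List.nodup_cons.1 hn).1
      simp [this]
    · have hac : a ≠ c := fun hc => (List.nodup_cons.1 hn).1 (hc ▸ h')
      simp [hac, ih (List.nodup_cons.1 hn).2 h']

lemma cnt_mul_le_sum_map {α : Type*} [DecidableEq α] (f : α → ℕ) (a : α) (l : List α) :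
    cnt a l * f a ≤ (l.map f).sum := by
  induction l with
  | nil => simp
  | cons b t ih =>
    simp only [cnt_cons, List.map_cons, List.sum_cons]
    by_cases hb : b = a
    · subst hb
      have : (if b = b then 1 else 0) = 1 := if_pos rfl
      rw [this, Nat.add_mul, Nat.one_mul]
      exact Nat.add_le_add le_rfl ih
    · simp only [hb, if_false, Nat.zero_add]
      omega

lemma mem_le_sum_map {α : Type*} (f : α → ℕ) {a : α} {l : List α} (h : a ∈ l) :
    f a ≤ (l.map f).sum := by
  induction l with
  | nil => simp at h
  | cons b t ih =>
    rcases List.mem_cons.1 h with rfl | h'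
    · simp
    · simp only [List.map_cons, List.sum_cons]
      exact le_add_of_nonneg_of_le (Nat.zero_le _) (ih h')

lemma two_le_sum_map {α : Type*} (f : α → ℕ) {p q : α} {l : List α}
    (hp : p ∈ l) (hq : q ∈ l) (hne : p ≠ q) : f p + f q ≤ (l.map f).sum := by
  induction l with
  | nil => simp at hp
  | cons b t ih =>
    simp only [List.map_cons, List.sum_cons]
    rcases List.mem_cons.1 hp with rfl | hp'
    · have hq' : q ∈ t := by
        rcases List.mem_cons.1 hq with rfl | h; · exact absurd rfl hne
        · exact h
      exact Nat.add_le_add le_rfl (mem_le_sum_map f hq')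
    · rcases List.mem_cons.1 hq with rfl | hq'
      · rw [Nat.add_comm (f p)]
        exact Nat.add_le_add le_rfl (mem_le_sum_map f hp')
      · exact le_add_of_nonneg_of_le (Nat.zero_le _) (ih hp' hq')

lemma flatMap_congr' {α β : Type*} {l : List α} {f g : α → List β}
    (h : ∀ x ∈ l, f x = g x) : l.flatMap f = l.flatMap g := by
  induction l with
  | nil => rfl
  | cons a t ih =>
    simp only [List.flatMap_cons, h a (by simp), ih fun x hx => h x (by simp [hx])]

lemma length_le_flatMap {α β : Type*} (σ : α → List β) (h : ∀ b, σ b ≠ []) (l : List α) :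
    l.length ≤ (l.flatMap σ).length := by
  induction l with
  | nil => simp
  | cons a t ih =>
    rw [List.flatMap_cons, List.length_append, List.length_cons]
    have : 1 ≤ (σ a).length := List.length_pos_iff.2 (h a)
    omega

lemma mem_pairs {κ : ℕ} {p : Fin κ × Fin κ} : p ∈ pairs κ ↔ p.1 < p.2 := by
  obtain ⟨i, j⟩ := p
  constructor
  · intro h
    simp only [pairs, List.mem_flatMap, List.mem_map, List.mem_filter, List.mem_finRange,
      decide_eq_true_eq, Prod.mk.injEq] at h
    obtain ⟨a, -, c, ⟨-, hlt⟩, h1, h2⟩ := h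
    subst h1; subst h2
    exact hlt
  · intro h
    simp only [pairs, List.mem_flatMap, List.mem_map, List.mem_filter, List.mem_finRange,
      decide_eq_true_eq, Prod.mk.injEq]
    exact ⟨i, trivial, j, ⟨trivial, h⟩, rfl, rfl⟩

lemma pairs_pairwise (κ : ℕ) :
    (pairs κ).Pairwise (fun p q => p.1 < q.1 ∨ (p.1 = q.1 ∧ p.2 < q.2)) := by
  unfold pairs
  rw [List.flatMap_def, List.pairwise_flatten]
  refine ⟨?_, ?_⟩
  · intro l hl
    simp only [List.mem_map] at hl
    obtain ⟨i, -, rfl⟩ := hl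
    rw [List.pairwise_map]
    refine List.Pairwise.imp ?_ ((List.pairwise_lt_finRange κ).filter _)
    intro a b hab
    exact Or.inr ⟨rfl, hab⟩
  · rw [List.pairwise_map]
    refine List.Pairwise.imp ?_ (List.pairwise_lt_finRange κ)
    intro a b hab x hx y hy
    simp only [List.mem_map, List.mem_filter] at hx hy
    obtain ⟨x', -, rfl⟩ := hx
    obtain ⟨y', -, rfl⟩ := hy
    exact Or.inl hab

/-- the `j`-th chunk of the target -/
def chunk {n m : ℕ} (edges : Fin m → Fin n × Fin n) (j : Fin m) : List (Letter n m) :=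
  [Sum.inl (edges j).1, Sum.inl (edges j).2, Sum.inr j.succ]

lemma target_eq {n m : ℕ} (edges : Fin m → Fin n × Fin n) :
    target n m edges = Sum.inr 0 :: (List.finRange m).flatMap (chunk edges) := rfl

lemma length_chunks {n m : ℕ} (edges : Fin m → Fin n × Fin n) (l : List (Fin m)) :
    (l.flatMap (chunk edges)).length = 3 * l.length := by
  induction l with
  | nil => simp
  | cons a t ih => simp [chunk, ih]; omega

lemma length_target {n m : ℕ} (edges : Fin m → Fin n × Fin n) :
    (target n m edges).length = 1 + 3 * m := by
  rw [target_eq, List.length_cons, length_chunks]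
  simp [Nat.add_comm]

lemma cnt_target {n m : ℕ} (edges : Fin m → Fin n × Fin n) (r : Fin (m + 1)) :
    cnt (Sum.inr r : Letter n m) (target n m edges) = 1 := by
  rw [target_eq, cnt_cons, cnt_flatMap]
  rcases Fin.eq_zero_or_eq_succ r with rfl | ⟨k, rfl⟩
  · have : ((List.finRange m).map fun j => cnt (Sum.inr 0 : Letter n m) (chunk edges j)).sum
        = ((List.finRange m).map fun _ => 0).sum := by
      refine congrArg _ (List.map_congr_left ?_)
      intro j _
      simp [chunk, Fin.succ_ne_zero]
    rw [this]
    simp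
  · have : ((List.finRange m).map fun j =>
        cnt (Sum.inr k.succ : Letter n m) (chunk edges j)).sum
        = ((List.finRange m).map fun j => if j = k then 1 else 0).sum := by
      refine congrArg _ (List.map_congr_left ?_)
      intro j _
      by_cases h : j = k
      · subst h; simp [chunk]
      · have hsk : j.succ ≠ k.succ := fun hc => h (Fin.succ_inj.mp hc)
        simp [chunk, h, hsk]
    rw [this]
    have : ((List.finRange m).map fun j => if j = k then 1 else 0).sum
        = cnt k (List.finRange m) := by
      induction (List.finRange m) with
      | nil => rfl
      | cons a t ih => by_cases h : a = k <;> simp [h, ih]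
    rw [this, cnt_eq_one_of_nodup (List.nodup_finRange m) (List.mem_finRange k)]
    simp [(Fin.succ_ne_zero k).symm]

lemma chunks_infix {n m : ℕ} (edges : Fin m → Fin n × Fin n) :
    ∀ (L : List (Fin m)) (A s B : List (Letter n m)),
    L.flatMap (chunk edges) = A ++ s ++ B →
    (∀ x ∈ s, ∃ a, x = Sum.inl a) → 2 ≤ s.length →
    ∃ j : Fin m, s = [Sum.inl (edges j).1, Sum.inl (edges j).2] := by
  intro L
  induction L with
  | nil =>
    intro A s B h hs hlen
    rw [List.flatMap_nil] at h
    have := congrArg List.length h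
    simp at this
    omega
  | cons j L' ih =>
    intro A s B h hs hlen
    rw [List.flatMap_cons] at h
    obtain ⟨s0, s', rfl⟩ : ∃ x t, s = x :: t := by
      rcases s with _ | ⟨x, t⟩
      · simp at hlen
      · exact ⟨x, t, rfl⟩
    obtain ⟨s1, s'', rfl⟩ : ∃ x t, s' = x :: t := by
      rcases s' with _ | ⟨x, t⟩
      · simp at hlen
      · exact ⟨x, t, rfl⟩
    rcases A with _ | ⟨x, (_ | ⟨y, (_ | ⟨z, A'⟩)⟩)⟩
    · simp only [chunk, List.nil_append, List.cons_append, List.cons.injEq] at h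
      obtain ⟨rfl, rfl, h3⟩ := h
      rcases s'' with _ | ⟨w, ws⟩
      · exact ⟨j, rfl⟩
      · simp only [List.cons_append, List.cons.injEq] at h3
        obtain ⟨rfl, -⟩ := h3
        obtain ⟨a, ha⟩ := hs (Sum.inr j.succ) (by simp)
        simp at ha
    · simp only [chunk, List.cons_append, List.nil_append, List.cons.injEq] at h
      obtain ⟨-, rfl, rfl, -⟩ := h
      obtain ⟨a, ha⟩ := hs (Sum.inr j.succ) (by simp)
      simp at ha
    · simp only [chunk, List.cons_append, List.nil_append, List.cons.injEq] at h
      obtain ⟨-, -, rfl, -⟩ := h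
      obtain ⟨a, ha⟩ := hs (Sum.inr j.succ) (by simp)
      simp at ha
    · simp only [chunk, List.cons_append, List.cons.injEq] at h
      obtain ⟨-, -, -, h4⟩ := h
      exact ih A' _ B (by simpa using h4) hs hlen

lemma target_infix {n m : ℕ} (edges : Fin m → Fin n × Fin n)
    (A s B : List (Letter n m)) (h : target n m edges = A ++ s ++ B)
    (hs : ∀ x ∈ s, ∃ a, x = Sum.inl a) (hlen : 2 ≤ s.length) :
    ∃ j : Fin m, s = [Sum.inl (edges j).1, Sum.inl (edges j).2] := by
  rw [target_eq] at h
  rcases A with _ | ⟨x, A'⟩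
  · rcases s with _ | ⟨s0, s'⟩
    · simp at hlen
    · simp only [List.nil_append, List.cons_append, List.cons.injEq] at h
      obtain ⟨rfl, -⟩ := h
      obtain ⟨a, ha⟩ := hs (Sum.inr 0) (by simp)
      simp at ha
  · simp only [List.cons_append, List.cons.injEq] at h
    exact chunks_infix edges _ A' s B h.2 hs hlen

lemma drop_dec {n m : ℕ} (edges : Fin m → Fin n × Fin n) :
    ∀ (d a : ℕ) (k : Fin m), a + d = k.val →
    ∃ g : List (Letter n m),
      ((List.finRange m).drop a).flatMap (chunk edges)
        = g ++ chunk edges k ++ ((List.finRange m).drop (k.val + 1)).flatMap (chunk edges) := by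
  intro d
  induction d with
  | zero =>
    intro a k hak
    have ha : a < (List.finRange m).length := by simp; omega
    rw [List.drop_eq_getElem_cons ha, List.flatMap_cons]
    have hk : (List.finRange m)[a] = k := by
      apply Fin.ext
      rw [List.getElem_finRange]
      simpa using hak
    rw [hk]
    exact ⟨[], by rw [show k.val + 1 = a + 1 by omega]; simp⟩
  | succ d ih =>
    intro a k hak
    have ha : a < (List.finRange m).length := by simp; omega
    obtain ⟨g', hg'⟩ := ih (a + 1) k (by omega)
    rw [List.drop_eq_getElem_cons ha, List.flatMap_cons, hg']
    exact ⟨chunk edges (List.finRange m)[a] ++ g', by simp [List.append_assoc]⟩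

lemma build {n m κ : ℕ} (edges : Fin m → Fin n × Fin n) (e : Fin κ × Fin κ → Fin m) :
    ∀ (L : List (Fin κ × Fin κ)), L.Pairwise (fun p q => e p < e q) →
    ∀ a : ℕ, (∀ p ∈ L, a ≤ (e p).val) →
    ∃ (gap : List (Letter n m)) (f : (Fin κ × Fin κ) → List (Letter n m)),
      (∀ p ∈ L, f p ≠ []) ∧
      gap ++ L.flatMap (fun p =>
          [Sum.inl (edges (e p)).1, Sum.inl (edges (e p)).2] ++ f p)
        = ((List.finRange m).drop a).flatMap (chunk edges) := by
  intro L
  induction L with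
  | nil =>
    intro _ a _
    exact ⟨((List.finRange m).drop a).flatMap (chunk edges), fun _ => [], by simp, by simp⟩
  | cons p L' ih =>
    intro hpw a ha
    have hall : ∀ q ∈ L', e p < e q := (List.pairwise_cons.1 hpw).1
    obtain ⟨gap', f', hf', heq'⟩ := ih (List.pairwise_cons.1 hpw).2 ((e p).val + 1)
      (fun q hq => hall q hq)
    obtain ⟨g, hg⟩ := drop_dec edges ((e p).val - a) a (e p)
      (by have := ha p (by simp); omega)
    have hpL' : p ∉ L' := fun hc => lt_irrefl _ (hall p hc)
    refine ⟨g, Function.update f' p (Sum.inr (e p).succ :: gap'), ?_, ?_⟩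
    · intro q hq
      rcases List.mem_cons.1 hq with rfl | hq'
      · simp [Function.update_self]
      · rw [Function.update_of_ne (fun hc : q = p => hpL' (hc ▸ hq'))]
        exact hf' q hq'
    · have hcongr : L'.flatMap (fun q =>
          [Sum.inl (edges (e q)).1, Sum.inl (edges (e q)).2] ++ Function.update f' p
            (Sum.inr (e p).succ :: gap') q)
          = L'.flatMap (fun q =>
          [Sum.inl (edges (e q)).1, Sum.inl (edges (e q)).2] ++ f' q) := by
        apply flatMap_congr'
        intro q hq
        rw [Function.update_of_ne (fun hc : q = p => hpL' (hc ▸ hq))]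
      rw [List.flatMap_cons, Function.update_self, hcongr, hg, ← heq']
      simp [chunk, List.append_assoc]

/-- **correctness of the reduction in Theorem 4.1.** Let `κ ≥ 2` and let
`G` be a graph on `{v₀, …, v_{n-1}}` whose edge list `e₀, …, e_{m-1}` (each edge an
ordered pair, smaller endpoint first) is sorted lexicographically. Then the single
string equation `T ≡ 𝒳` above is satisfied by some assignment of nonempty strings to
the blocks if and only if `G` contains a clique of size `κ`. -/
theorem stmt_5 (n m κ : ℕ) (hκ : 2 ≤ κ)
    (edges : Fin m → Fin n × Fin n)
    (horder : ∀ j, (edges j).1 < (edges j).2)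
    (hsorted : ∀ j j' : Fin m, j < j' →
      (edges j).1 < (edges j').1 ∨
        ((edges j).1 = (edges j').1 ∧ (edges j).2 < (edges j').2)) :
    (∃ σ : Blk κ → List (Letter n m),
        (∀ b, σ b ≠ []) ∧ (pattern κ).flatMap σ = target n m edges) ↔
    (∃ S : Finset (Fin n), S.card = κ ∧
        ∀ u ∈ S, ∀ w ∈ S, u ≠ w →
          ∃ j : Fin m, edges j = (u, w) ∨ edges j = (w, u)) := by
  constructor
  · rintro ⟨σ, hσ, heq⟩
    by_cases h3 : 3 ≤ κ
    · -- main case κ ≥ 3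
      -- Step A: the Xᵢ blocks contain no separator letters
      have hyfree : ∀ (i : Fin κ) (r : Fin (m + 1)),
          (Sum.inr r : Letter n m) ∉ σ (Sum.inl i) := by
        intro i r hmem
        have hcard : 1 < (Finset.univ.erase i).card := by
          rw [Finset.card_erase_of_mem (Finset.mem_univ i), Finset.card_univ,
            Fintype.card_fin]
          omega
        obtain ⟨a, ha, b, hb, hab⟩ := Finset.one_lt_card.1 hcard
        have hai : a ≠ i := Finset.ne_of_mem_erase ha
        have hbi : b ≠ i := Finset.ne_of_mem_erase hb
        have key : ∀ c : Fin κ, c ≠ i → ∃ P ∈ pairs κ,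
            (P.1 = i ∧ P.2 = c) ∨ (P.1 = c ∧ P.2 = i) := by
          intro c hci
          rcases Ne.lt_or_gt hci with h | h
          · exact ⟨(c, i), mem_pairs.2 h, Or.inr ⟨rfl, rfl⟩⟩
          · exact ⟨(i, c), mem_pairs.2 h, Or.inl ⟨rfl, rfl⟩⟩
        obtain ⟨Pa, hPam, hPa⟩ := key a hai
        obtain ⟨Pb, hPbm, hPb⟩ := key b hbi
        obtain ⟨Pa1, Pa2⟩ := Pa
        obtain ⟨Pb1, Pb2⟩ := Pb
        have hne : (Pa1, Pa2) ≠ (Pb1, Pb2) := by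
          intro hc
          rw [Prod.mk.injEq] at hc
          obtain ⟨h1, h2⟩ := hc
          rcases hPa with ⟨ha1, ha2⟩ | ⟨ha1, ha2⟩ <;>
            rcases hPb with ⟨hb1, hb2⟩ | ⟨hb1, hb2⟩ <;> simp_all
        -- count of Xᵢ in the pattern is at least 2
        have hTcnt : cnt (Sum.inl i : Blk κ) (pattern κ) ≥ 2 := by
          have hP : pattern κ = Sum.inr (Sum.inl ()) :: (pairs κ).flatMap fun p =>
              [Sum.inl p.1, Sum.inl p.2, Sum.inr (Sum.inr p)] := rfl
          rw [hP, cnt_cons, cnt_flatMap]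
          have h1 : (1 : ℕ) ≤ cnt (Sum.inl i : Blk κ)
              [Sum.inl (Pa1, Pa2).1, Sum.inl (Pa1, Pa2).2, Sum.inr (Sum.inr (Pa1, Pa2))] := by
            rcases hPa with ⟨h', -⟩ | ⟨-, h'⟩ <;> subst h' <;> simp
          have h2 : (1 : ℕ) ≤ cnt (Sum.inl i : Blk κ)
              [Sum.inl (Pb1, Pb2).1, Sum.inl (Pb1, Pb2).2, Sum.inr (Sum.inr (Pb1, Pb2))] := by
            rcases hPb with ⟨h', -⟩ | ⟨-, h'⟩ <;> subst h' <;> simp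
          have := two_le_sum_map
            (fun p : Fin κ × Fin κ => cnt (Sum.inl i : Blk κ)
              [Sum.inl p.1, Sum.inl p.2, Sum.inr (Sum.inr p)]) hPam hPbm hne
          beta_reduce at this
          omega
        -- hence the separator letter appears at least twice in the target
        have hge2 : 2 ≤ cnt (Sum.inr r : Letter n m) (target n m edges) := by
          rw [← heq, cnt_flatMap]
          have hmul := cnt_mul_le_sum_map
            (fun b => cnt (Sum.inr r : Letter n m) (σ b)) (Sum.inl i) (pattern κ)
          have hpos : 1 ≤ cnt (Sum.inr r : Letter n m) (σ (Sum.inl i)) :=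
            cnt_pos_of_mem hmem
          calc 2 ≤ cnt (Sum.inl i : Blk κ) (pattern κ) *
                cnt (Sum.inr r : Letter n m) (σ (Sum.inl i)) := by
                have := hTcnt; nlinarith
            _ ≤ _ := hmul
        rw [cnt_target] at hge2
        omega
      -- Step B: each pair gives an edge
      have hBnd : ∀ p ∈ pairs κ, ∃ jdx : Fin m,
          σ (Sum.inl p.1) = [Sum.inl (edges jdx).1] ∧
          σ (Sum.inl p.2) = [Sum.inl (edges jdx).2] := by
        intro p hp
        obtain ⟨L1, L2, hsplit⟩ := List.append_of_mem hp
        have hT : target n m edges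
            = (σ (Sum.inr (Sum.inl ())) ++ L1.flatMap fun q =>
                σ (Sum.inl q.1) ++ σ (Sum.inl q.2) ++ σ (Sum.inr (Sum.inr q)))
              ++ (σ (Sum.inl p.1) ++ σ (Sum.inl p.2))
              ++ (σ (Sum.inr (Sum.inr p)) ++ L2.flatMap fun q =>
                σ (Sum.inl q.1) ++ σ (Sum.inl q.2) ++ σ (Sum.inr (Sum.inr q))) := by
          rw [← heq]
          have hP : pattern κ = Sum.inr (Sum.inl ()) :: (pairs κ).flatMap fun q =>
              [Sum.inl q.1, Sum.inl q.2, Sum.inr (Sum.inr q)] := rfl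
          rw [hP, hsplit]
          simp [List.flatMap_append, List.flatMap_cons, List.flatMap_assoc,
            List.append_assoc]
        have l1 : 1 ≤ (σ (Sum.inl p.1)).length := List.length_pos_iff.2 (hσ _)
        have l2 : 1 ≤ (σ (Sum.inl p.2)).length := List.length_pos_iff.2 (hσ _)
        obtain ⟨jdx, hj⟩ := target_infix edges _ _ _ hT
          (by
            intro x hx
            rcases List.mem_append.1 hx with hx' | hx'
            · cases x with
              | inl a => exact ⟨a, rfl⟩
              | inr r => exact absurd hx' (hyfree p.1 r)
            · cases x with
              | inl a => exact ⟨a, rfl⟩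
              | inr r => exact absurd hx' (hyfree p.2 r))
          (by rw [List.length_append]; omega)
        have hlen2 : (σ (Sum.inl p.1)).length + (σ (Sum.inl p.2)).length = 2 := by
          have := congrArg List.length hj
          simpa using this
        obtain ⟨x, hx⟩ := List.length_eq_one_iff.1
          (by omega : (σ (Sum.inl p.1)).length = 1)
        obtain ⟨y, hy⟩ := List.length_eq_one_iff.1
          (by omega : (σ (Sum.inl p.2)).length = 1)
        rw [hx, hy] at hj
        simp only [List.singleton_append, List.cons.injEq] at hj
        obtain ⟨rfl, rfl, -⟩ := hj
        exact ⟨jdx, hx, hy⟩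
      -- Step C: every Xᵢ is a single vertex letter
      have hsing : ∀ i : Fin κ, ∃ a : Fin n, σ (Sum.inl i) = [Sum.inl a] := by
        intro i
        have hex : ∃ c : Fin κ, c ≠ i := by
          refine ⟨if i = ⟨0, by omega⟩ then ⟨1, by omega⟩ else ⟨0, by omega⟩, ?_⟩
          split_ifs with h
          · rw [h]
            intro hc
            exact absurd (congrArg Fin.val hc) (by simp)
          · exact fun hc => h hc.symm
        obtain ⟨c, hci⟩ := hex
        rcases Ne.lt_or_gt hci with h | h
        · obtain ⟨jdx, h1, h2⟩ := hBnd (c, i) (mem_pairs.2 h)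
          exact ⟨(edges jdx).2, h2⟩
        · obtain ⟨jdx, h1, h2⟩ := hBnd (i, c) (mem_pairs.2 h)
          exact ⟨(edges jdx).1, h1⟩
      choose u hu using hsing
      -- Step D: extract the clique
      have hedge : ∀ i j : Fin κ, i < j → ∃ jdx : Fin m, edges jdx = (u i, u j) := by
        intro i j hij
        obtain ⟨jdx, h1, h2⟩ := hBnd (i, j) (mem_pairs.2 hij)
        refine ⟨jdx, ?_⟩
        have e1 : u i = (edges jdx).1 := by
          have := (hu i).symm.trans h1
          simpa using this
        have e2 : u j = (edges jdx).2 := by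
          have := (hu j).symm.trans h2
          simpa using this
        rw [Prod.ext_iff]
        exact ⟨e1.symm, e2.symm⟩
      have hmono : StrictMono u := by
        intro i j hij
        obtain ⟨jdx, hjdx⟩ := hedge i j hij
        have := horder jdx
        rw [hjdx] at this
        exact this
      refine ⟨Finset.image u Finset.univ, ?_, ?_⟩
      · rw [Finset.card_image_of_injective _ hmono.injective, Finset.card_univ,
          Fintype.card_fin]
      · intro x hx y hy hxy
        obtain ⟨i, -, rfl⟩ := Finset.mem_image.1 hx
        obtain ⟨j, -, rfl⟩ := Finset.mem_image.1 hy
        have hij : i ≠ j := fun hc => hxy (congrArg u hc)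
        rcases Ne.lt_or_gt hij with h | h
        · obtain ⟨jdx, hjdx⟩ := hedge i j h
          exact ⟨jdx, Or.inl hjdx⟩
        · obtain ⟨jdx, hjdx⟩ := hedge j i h
          exact ⟨jdx, Or.inr hjdx⟩
    · -- degenerate case κ = 2
      have hκ2 : κ = 2 := by omega
      subst hκ2
      have hlen := congrArg List.length heq
      rw [length_target] at hlen
      have h4 : (pattern 2).length ≤ ((pattern 2).flatMap σ).length :=
        length_le_flatMap σ hσ _
      have hp4 : (pattern 2).length = 4 := by rfl
      have hm : 1 ≤ m := by omega
      set j0 : Fin m := ⟨0, hm⟩ with hj0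
      refine ⟨{(edges j0).1, (edges j0).2}, ?_, ?_⟩
      · rw [Finset.card_insert_of_notMem (by simp [(horder j0).ne]),
          Finset.card_singleton]
      · intro x hx y hy hxy
        simp only [Finset.mem_insert, Finset.mem_singleton] at hx hy
        rcases hx with rfl | rfl <;> rcases hy with rfl | rfl
        · exact absurd rfl hxy
        · exact ⟨j0, Or.inl rfl⟩
        · exact ⟨j0, Or.inr rfl⟩
        · exact absurd rfl hxy
  · rintro ⟨S, hScard, hclique⟩
    have humono : StrictMono (S.orderEmbOfFin hScard) := (S.orderEmbOfFin hScard).strictMono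
    set u : Fin κ → Fin n := fun i => S.orderEmbOfFin hScard i with hudef
    have he : ∀ p : Fin κ × Fin κ, p.1 < p.2 →
        ∃ jdx : Fin m, edges jdx = (u p.1, u p.2) := by
      intro p hp
      have hne : u p.1 ≠ u p.2 := fun hc => absurd (humono.injective hc) hp.ne
      obtain ⟨jdx, hj⟩ := hclique (u p.1) (Finset.orderEmbOfFin_mem S hScard p.1)
        (u p.2) (Finset.orderEmbOfFin_mem S hScard p.2) hne
      rcases hj with hj | hj
      · exact ⟨jdx, hj⟩
      · exfalso
        have h1 := horder jdx
        rw [hj] at h1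
        exact absurd (humono hp) (lt_asymm h1)
    have h01 : ((⟨0, by omega⟩ : Fin κ), (⟨1, by omega⟩ : Fin κ)).1 <
        ((⟨0, by omega⟩ : Fin κ), (⟨1, by omega⟩ : Fin κ)).2 := by
      simp [Fin.lt_def]
    obtain ⟨j₀, -⟩ := he _ h01
    set e : Fin κ × Fin κ → Fin m :=
      fun p => if h : p.1 < p.2 then (he p h).choose else j₀ with hedef
    have he' : ∀ p ∈ pairs κ, edges (e p) = (u p.1, u p.2) := by
      intro p hp
      have hp' := mem_pairs.1 hp
      simp only [hedef, dif_pos hp']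
      exact (he p hp').choose_spec
    have hpw : (pairs κ).Pairwise (fun p q => e p < e q) := by
      refine (pairs_pairwise κ).imp_of_mem ?_
      intro p q hp hq hlex
      have hep := he' p hp
      have heq' := he' q hq
      by_contra hle
      push_neg at hle
      rcases eq_or_lt_of_le hle with hEq | hlt
      · have hpq : (u p.1, u p.2) = (u q.1, u q.2) := by
          rw [← hep, ← heq', hEq]
        rw [Prod.mk.injEq] at hpq
        have h1 : p.1 = q.1 := humono.injective hpq.1
        have h2 : p.2 = q.2 := humono.injective hpq.2
        rcases hlex with h | ⟨h, h'⟩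
        · rw [h1] at h; exact lt_irrefl _ h
        · rw [h2] at h'; exact lt_irrefl _ h'
      · have hs := hsorted _ _ hlt
        rw [hep, heq'] at hs
        rcases hlex with h | ⟨h, h'⟩ <;> rcases hs with h2 | ⟨h2, h3⟩
        · exact absurd (humono h) (lt_asymm h2)
        · rw [humono.injective h2] at h; exact lt_irrefl _ h
        · rw [h] at h2; exact lt_irrefl _ h2
        · exact absurd (humono h') (lt_asymm h3)
    obtain ⟨gap, f, hf, hbuild⟩ := build edges e (pairs κ) hpw 0 (fun _ _ => Nat.zero_le _)
    rw [List.drop_zero] at hbuild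
    refine ⟨fun b => Sum.elim (fun i => [Sum.inl (u i)])
      (Sum.elim (fun _ => Sum.inr 0 :: gap)
        (fun p => if p ∈ pairs κ then f p else [Sum.inr 0])) b, ?_, ?_⟩
    · rintro (i | (z | p)) <;> simp only [Sum.elim_inl, Sum.elim_inr]
      · simp
      · simp
      · split_ifs with h
        · exact hf p h
        · simp
    · have hP : pattern κ = Sum.inr (Sum.inl ()) :: (pairs κ).flatMap fun q =>
          [Sum.inl q.1, Sum.inl q.2, Sum.inr (Sum.inr q)] := rfl
      rw [hP, target_eq, List.flatMap_cons, List.flatMap_assoc]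
      simp only [Sum.elim_inl, Sum.elim_inr, List.flatMap_cons, List.flatMap_nil,
        List.append_nil]
      have hinner : (pairs κ).flatMap (fun q =>
            [Sum.inl (u q.1)] ++ ([Sum.inl (u q.2)] ++
              (if q ∈ pairs κ then f q else [Sum.inr 0])))
          = (pairs κ).flatMap (fun q =>
            [Sum.inl (edges (e q)).1, Sum.inl (edges (e q)).2] ++ f q) := by
        apply flatMap_congr'
        intro q hq
        have h1 : (edges (e q)).1 = u q.1 := by rw [he' q hq]
        have h2 : (edges (e q)).2 = u q.2 := by rw [he' q hq]
        rw [if_pos hq, h1, h2]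
        simp
      rw [hinner]
      rw [List.cons_append, hbuild]

end Stmt5
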